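/- For every t > 0, every x ∈ ℝ^d, and every direction u ∈ ℝ^d, the Hessian of the smoothed objective satisfies the second-order Tweedie identity uᵀ ∇²_x g(x;t) u = (λ/t²) · ( t‖u‖² − Var_{y∼p_{0|t}(·|x)}( ⟨y, u⟩ ) ). -/

import Mathlib

set_option synthInstance.maxHeartbeats 1000000
set_option maxHeartbeats 1000000


open MeasureTheory
open scoped RealInnerProductSpace

/-- The Gibbs density `p₀(y) = e^{-f(y)/λ} / ∫ e^{-f(z)/λ} dz`. -/
noncomputable def gibbs {d : ℕ} (lam : ℝ) (f : EuclideanSpace ℝ (Fin d) → ℝ)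
    (y : EuclideanSpace ℝ (Fin d)) : ℝ :=
  Real.exp (-(f y) / lam) / ∫ z, Real.exp (-(f z) / lam)

/-- The Gaussian kernel `k(z;t) = (2πt)^{-d/2} e^{-‖z‖²/(2t)}`. -/
noncomputable def gaussK {d : ℕ} (t : ℝ) (z : EuclideanSpace ℝ (Fin d)) : ℝ :=
  (2 * Real.pi * t) ^ (-(d : ℝ) / 2) * Real.exp (-‖z‖ ^ 2 / (2 * t))

/-- The smoothed density `p(x;t) = ∫ p₀(y) k(x-y;t) dy`. -/
noncomputable def smoothedDensity {d : ℕ} (lam : ℝ) (f : EuclideanSpace ℝ (Fin d) → ℝ)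
    (t : ℝ) (x : EuclideanSpace ℝ (Fin d)) : ℝ :=
  ∫ y, gibbs lam f y * gaussK t (x - y)

/-- The smoothed objective `g(x;t) = -λ log p(x;t)`. -/
noncomputable def smoothedObj {d : ℕ} (lam : ℝ) (f : EuclideanSpace ℝ (Fin d) → ℝ)
    (t : ℝ) (x : EuclideanSpace ℝ (Fin d)) : ℝ :=
  -lam * Real.log (smoothedDensity lam f t x)

/-- The posterior density `p_{0|t}(y|x) = p₀(y) k(x-y;t) / p(x;t)`. -/
noncomputable def posterior {d : ℕ} (lam : ℝ) (f : EuclideanSpace ℝ (Fin d) → ℝ)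
    (t : ℝ) (x y : EuclideanSpace ℝ (Fin d)) : ℝ :=
  gibbs lam f y * gaussK t (x - y) / smoothedDensity lam f t x

/-- The Hessian quadratic form `uᵀ ∇²g(x) u`, as the second directional derivative. -/
noncomputable def hessQF {d : ℕ} (g : EuclideanSpace ℝ (Fin d) → ℝ)
    (x u : EuclideanSpace ℝ (Fin d)) : ℝ :=
  (fderiv ℝ (fun x' => (fderiv ℝ g x') u) x) u

namespace TweedieAux

variable {d : ℕ}
local notation "E" => EuclideanSpace ℝ (Fin d)

lemma hasFDerivAt_normsq_sub (y x : E) :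
    HasFDerivAt (fun x' : E => ‖x' - y‖ ^ 2) ((2:ℝ) • innerSL ℝ (x - y)) x := by
  have h := ((hasFDerivAt_id x).sub_const y).inner ℝ ((hasFDerivAt_id x).sub_const y)
  simp only [id] at h
  have heq : (fun x' : E => ⟪x' - y, x' - y⟫) = fun x' : E => ‖x' - y‖ ^ 2 := by
    funext x'; exact real_inner_self_eq_norm_sq _
  rw [heq] at h
  refine h.congr_fderiv ?_
  ext v
  simp only [ContinuousLinearMap.coe_smul', Pi.smul_apply, innerSL_apply_apply, smul_eq_mul,
    ContinuousLinearMap.coe_comp', Function.comp_apply, ContinuousLinearMap.prod_apply,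
    ContinuousLinearMap.coe_id', id, fderivInnerCLM_apply]
  rw [real_inner_comm v (x - y)]
  ring

lemma hasFDerivAt_gaussK_sub {t : ℝ} (ht : 0 < t) (y x : E) :
    HasFDerivAt (fun x' : E => gaussK t (x' - y))
      ((gaussK t (x - y) / t) • innerSL ℝ (y - x)) x := by
  have h1 : HasFDerivAt (fun x' : E => -‖x' - y‖ ^ 2 / (2 * t))
      ((-(1/(2*t))) • ((2:ℝ) • innerSL ℝ (x - y))) x := by
    have := (hasFDerivAt_normsq_sub y x).const_mul (-(1/(2*t)))
    refine this.congr_of_eventuallyEq (Filter.Eventually.of_forall fun x' => ?_)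
    field_simp
  have h3 := (h1.exp).const_mul ((2 * Real.pi * t) ^ (-(d : ℝ) / 2))
  refine h3.congr_fderiv ?_
  ext v
  simp only [gaussK, ContinuousLinearMap.coe_smul', Pi.smul_apply, innerSL_apply_apply,
    smul_eq_mul]
  rw [inner_sub_left]
  ring_nf
  rw [inner_sub_left]
  ring

lemma hasFDerivAt_inner_sub (y u x : E) :
    HasFDerivAt (fun x' : E => ⟪y - x', u⟫) (-(innerSL ℝ u)) x := by
  have h : (fun x' : E => ⟪y - x', u⟫) = fun x' : E => ⟪y, u⟫ - (innerSL ℝ u) x' := by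
    funext x'
    rw [inner_sub_left, innerSL_apply_apply, real_inner_comm x' u]
  rw [h]
  exact (innerSL ℝ u).hasFDerivAt.const_sub _

lemma s_exp_le (s : ℝ) (hs : 0 ≤ s) : s * Real.exp (-s) ≤ 1 := by
  rw [Real.exp_neg, ← div_eq_mul_inv, div_le_one (Real.exp_pos s)]
  have := Real.add_one_le_exp s
  linarith

lemma gaussK_pos {t : ℝ} (ht : 0 < t) (z : E) : 0 < gaussK t z := by
  unfold gaussK; positivity

lemma gaussK_le {t : ℝ} (ht : 0 < t) (z : E) :
    gaussK t z ≤ (2 * Real.pi * t) ^ (-(d : ℝ) / 2) := by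
  unfold gaussK
  have h1 : Real.exp (-‖z‖ ^ 2 / (2 * t)) ≤ 1 := by
    rw [Real.exp_le_one_iff]
    have : (0:ℝ) ≤ ‖z‖ ^ 2 / (2 * t) := by positivity
    rw [neg_div]; linarith
  have hC : (0:ℝ) < (2 * Real.pi * t) ^ (-(d : ℝ) / 2) := by positivity
  nlinarith

lemma sq_mul_gaussK_le {t : ℝ} (ht : 0 < t) (z : E) :
    ‖z‖ ^ 2 * gaussK t z ≤ (2 * Real.pi * t) ^ (-(d : ℝ) / 2) * (2 * t) := by
  unfold gaussK
  have h := s_exp_le (‖z‖ ^ 2 / (2 * t)) (by positivity)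
  rw [div_mul_eq_mul_div, div_le_one (by positivity)] at h
  have hC : (0:ℝ) < (2 * Real.pi * t) ^ (-(d : ℝ) / 2) := by positivity
  have : -‖z‖ ^ 2 / (2 * t) = -(‖z‖ ^ 2 / (2 * t)) := by ring
  rw [this]
  nlinarith

lemma norm_mul_gaussK_le {t : ℝ} (ht : 0 < t) (z : E) :
    ‖z‖ * gaussK t z ≤ (2 * Real.pi * t) ^ (-(d : ℝ) / 2) * (1 + 2 * t) := by
  have h1 := gaussK_le ht z
  have h2 := sq_mul_gaussK_le ht z
  have h3 := gaussK_pos ht z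
  have h4 : ‖z‖ ≤ 1 + ‖z‖ ^ 2 := by nlinarith [sq_nonneg (‖z‖ - 1)]
  nlinarith


/-- first-derivative integrand -/
noncomputable def D1 (q : E → ℝ) (t : ℝ) (x' y : E) : E →L[ℝ] ℝ :=
  (q y * (gaussK t (x' - y) / t)) • innerSL ℝ (y - x')

/-- second-derivative integrand -/
noncomputable def D2 (q : E → ℝ) (t : ℝ) (u x' y : E) : E →L[ℝ] ℝ :=
  (q y / t) • (gaussK t (x' - y) • (-(innerSL ℝ u)) +
    ⟪y - x', u⟫ • ((gaussK t (x' - y) / t) • innerSL ℝ (y - x')))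

lemma norm_smul_clm (c : ℝ) (L : E →L[ℝ] ℝ) : ‖c • L‖ = |c| * ‖L‖ := by
  have h := norm_smul (β := E →L[ℝ] ℝ) c L
  rw [h, Real.norm_eq_abs]

lemma D1_apply (q : E → ℝ) (t : ℝ) (x' y u : E) :
    D1 q t x' y u = q y * (gaussK t (x' - y) / t) * ⟪y - x', u⟫ := by
  simp only [D1, ContinuousLinearMap.coe_smul', Pi.smul_apply, innerSL_apply_apply, smul_eq_mul]

lemma D2_apply (q : E → ℝ) {t : ℝ} (ht : 0 < t) (u x' y : E) :
    D2 q t u x' y u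
      = q y * gaussK t (x' - y) * (⟪y - x', u⟫ ^ 2 / t ^ 2 - ‖u‖ ^ 2 / t) := by
  have hu : ⟪u, u⟫ = ‖u‖ ^ 2 := real_inner_self_eq_norm_sq u
  simp only [D2, ContinuousLinearMap.add_apply, ContinuousLinearMap.coe_smul',
    Pi.smul_apply, ContinuousLinearMap.neg_apply, innerSL_apply_apply, smul_eq_mul, hu]
  have htne : t ≠ 0 := ne_of_gt ht
  generalize (⟪y - x', u⟫ : ℝ) = i
  field_simp
  ring

lemma hasFDerivAt_D1 {q : E → ℝ} {t : ℝ} (ht : 0 < t) (y x' : E) :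
    HasFDerivAt (fun x'' => q y * gaussK t (x'' - y)) (D1 q t x' y) x' := by
  have h := (hasFDerivAt_gaussK_sub ht y x').const_mul (q y)
  have : q y • ((gaussK t (x' - y) / t) • innerSL ℝ (y - x')) = D1 q t x' y := by
    rw [smul_smul]; rfl
  rwa [this] at h

lemma norm_D1_le {q : E → ℝ} {t : ℝ} (ht : 0 < t) (hq : ∀ y, 0 ≤ q y) (x' y : E) :
    ‖D1 q t x' y‖ ≤ q y * ((2 * Real.pi * t) ^ (-(d : ℝ) / 2) * (1 + 2 * t) / t) := by
  rw [D1, norm_smul_clm, innerSL_apply_norm,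
    abs_of_nonneg (mul_nonneg (hq y) (div_nonneg (gaussK_pos ht _).le ht.le))]
  have h1 : ‖y - x'‖ * gaussK t (x' - y) ≤ (2 * Real.pi * t) ^ (-(d : ℝ) / 2) * (1 + 2 * t) := by
    rw [norm_sub_rev]; exact norm_mul_gaussK_le ht _
  have e1 : q y * (gaussK t (x' - y) / t) * ‖y - x'‖
      = (q y * (‖y - x'‖ * gaussK t (x' - y))) / t := by ring
  have e2 : q y * ((2 * Real.pi * t) ^ (-(d : ℝ) / 2) * (1 + 2 * t) / t)
      = (q y * ((2 * Real.pi * t) ^ (-(d : ℝ) / 2) * (1 + 2 * t))) / t := by ring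
  rw [e1, e2, div_le_div_iff_of_pos_right ht]
  exact mul_le_mul_of_nonneg_left h1 (hq y)

lemma hasFDerivAt_D2 {q : E → ℝ} {t : ℝ} (ht : 0 < t) (u y x' : E) :
    HasFDerivAt (fun x'' => D1 q t x'' y u) (D2 q t u x' y) x' := by
  have heq : (fun x'' => D1 q t x'' y u)
      = fun x'' => (q y / t) * (gaussK t (x'' - y) * ⟪y - x'', u⟫) := by
    funext x''; rw [D1_apply]; ring
  rw [heq]
  exact ((hasFDerivAt_gaussK_sub ht y x').mul (hasFDerivAt_inner_sub y u x')).const_mul (q y / t)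

lemma norm_D2_le {q : E → ℝ} {t : ℝ} (ht : 0 < t) (hq : ∀ y, 0 ≤ q y) (u x' y : E) :
    ‖D2 q t u x' y‖ ≤ q y * (3 * (2 * Real.pi * t) ^ (-(d : ℝ) / 2) * ‖u‖ / t) := by
  set Cd : ℝ := (2 * Real.pi * t) ^ (-(d : ℝ) / 2) with hCd
  have hCdpos : 0 < Cd := by rw [hCd]; positivity
  have hKpos := gaussK_pos ht (x' - y)
  have hKle : gaussK t (x' - y) ≤ Cd := gaussK_le ht _
  have hsq : ‖y - x'‖ ^ 2 * gaussK t (x' - y) ≤ Cd * (2 * t) := by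
    rw [norm_sub_rev]; exact sq_mul_gaussK_le ht _
  have hi : |⟪y - x', u⟫| ≤ ‖y - x'‖ * ‖u‖ := abs_real_inner_le_norm _ _
  have htne : t ≠ 0 := ne_of_gt ht
  have hin : ‖gaussK t (x' - y) • (-(innerSL ℝ u)) +
      (⟪y - x', u⟫ : ℝ) • ((gaussK t (x' - y) / t) • innerSL ℝ (y - x'))‖
      ≤ gaussK t (x' - y) * ‖u‖ + |(⟪y - x', u⟫ : ℝ)| * (gaussK t (x' - y) / t * ‖y - x'‖) := by
    refine (norm_add_le _ _).trans (le_of_eq ?_)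
    rw [norm_smul_clm, norm_smul_clm, norm_neg, innerSL_apply_norm, norm_smul_clm,
      innerSL_apply_norm, abs_of_nonneg hKpos.le, abs_of_nonneg (div_nonneg hKpos.le ht.le)]
  have step1 : ‖D2 q t u x' y‖ ≤ (q y / t) *
      (gaussK t (x' - y) * ‖u‖ + |(⟪y - x', u⟫ : ℝ)| * (gaussK t (x' - y) / t * ‖y - x'‖)) := by
    rw [D2, norm_smul_clm, abs_of_nonneg (div_nonneg (hq y) ht.le)]
    exact mul_le_mul_of_nonneg_left hin (div_nonneg (hq y) ht.le)
  have step2 : |⟪y - x', u⟫| * (gaussK t (x' - y) / t * ‖y - x'‖) ≤ 2 * Cd * ‖u‖ := by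
    calc |⟪y - x', u⟫| * (gaussK t (x' - y) / t * ‖y - x'‖)
        ≤ (‖y - x'‖ * ‖u‖) * (gaussK t (x' - y) / t * ‖y - x'‖) := by
          exact mul_le_mul_of_nonneg_right hi
            (mul_nonneg (div_nonneg hKpos.le ht.le) (norm_nonneg _))
      _ = ‖u‖ * ((‖y - x'‖ ^ 2 * gaussK t (x' - y)) / t) := by ring
      _ ≤ ‖u‖ * ((Cd * (2 * t)) / t) := by
          refine mul_le_mul_of_nonneg_left ?_ (norm_nonneg u)
          rw [div_le_div_iff_of_pos_right ht]
          exact hsq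
      _ = 2 * Cd * ‖u‖ := by field_simp
  have step3 : gaussK t (x' - y) * ‖u‖ ≤ Cd * ‖u‖ :=
    mul_le_mul_of_nonneg_right hKle (norm_nonneg u)
  calc ‖D2 q t u x' y‖ ≤ (q y / t) * (Cd * ‖u‖ + 2 * Cd * ‖u‖) := by
        refine step1.trans ?_
        exact mul_le_mul_of_nonneg_left (by linarith) (div_nonneg (hq y) ht.le)
    _ = q y * (3 * Cd * ‖u‖ / t) := by ring

end TweedieAux

open TweedieAux Filter

/-- second-order Tweedie identity:
`uᵀ ∇²g(x;t) u = (λ/t²) (t‖u‖² - Var_{y ∼ p_{0|t}(·|x)}(⟨y, u⟩))`. -/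
theorem tweedie_second_order
    (d : ℕ) (hd : 1 ≤ d) (lam : ℝ) (hlam : 0 < lam)
    (f : EuclideanSpace ℝ (Fin d) → ℝ) (hf : Measurable f)
    (hZpos : 0 < ∫ z, Real.exp (-(f z) / lam))
    (hZfin : Integrable (fun z => Real.exp (-(f z) / lam)))
    (hmom2 : Integrable (fun y => ‖y‖ ^ 2 * gibbs lam f y))
    (t : ℝ) (ht : 0 < t) (x u : EuclideanSpace ℝ (Fin d)) :
    hessQF (fun z => smoothedObj lam f t z) x u
      = (lam / t ^ 2) *
          (t * ‖u‖ ^ 2 -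
            ((∫ y, posterior lam f t x y * ⟪y, u⟫ ^ 2)
              - (∫ y, posterior lam f t x y * ⟪y, u⟫) ^ 2)) := by
  have htne : t ≠ 0 := ne_of_gt ht
  set Cd : ℝ := (2 * Real.pi * t) ^ (-(d : ℝ) / 2) with hCddef
  have hCd : 0 < Cd := by rw [hCddef]; positivity
  set q : EuclideanSpace ℝ (Fin d) → ℝ := gibbs lam f with hqdef
  have hq_pos : ∀ y, 0 < q y := fun y => div_pos (Real.exp_pos _) hZpos
  have hq_nn : ∀ y, 0 ≤ q y := fun y => (hq_pos y).le
  have hq_meas : Measurable q :=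
    (Real.measurable_exp.comp ((hf.neg).div_const lam)).div_const _
  have hq_int : Integrable q := hZfin.div_const _
  have hKcont : Continuous (fun z : EuclideanSpace ℝ (Fin d) => gaussK t z) := by
    unfold gaussK
    exact continuous_const.mul (Real.continuous_exp.comp (((continuous_norm.pow 2).neg).div_const _))
  have hKxcont : ∀ x' : EuclideanSpace ℝ (Fin d), Continuous (fun y => gaussK t (x' - y)) :=
    fun x' => hKcont.comp (continuous_const.sub continuous_id)
  have hFmeas : ∀ x' : EuclideanSpace ℝ (Fin d),
      AEStronglyMeasurable (fun y => q y * gaussK t (x' - y)) volume :=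
    fun x' => hq_meas.aestronglyMeasurable.mul (hKxcont x').aestronglyMeasurable
  have hFint : ∀ x' : EuclideanSpace ℝ (Fin d),
      Integrable (fun y => q y * gaussK t (x' - y)) := by
    intro x'
    refine (hq_int.const_mul Cd).mono' (hFmeas x') (Eventually.of_forall fun y => ?_)
    rw [Real.norm_eq_abs, abs_of_nonneg (mul_nonneg (hq_nn y) (gaussK_pos ht _).le)]
    calc q y * gaussK t (x' - y) ≤ q y * Cd := by
          refine mul_le_mul_of_nonneg_left ?_ (hq_nn y)
          rw [hCddef]; exact gaussK_le ht _
      _ = Cd * q y := mul_comm _ _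
  have hp_eq : ∀ x' : EuclideanSpace ℝ (Fin d),
      smoothedDensity lam f t x' = ∫ y, q y * gaussK t (x' - y) := fun _ => rfl
  have hp_pos : ∀ x' : EuclideanSpace ℝ (Fin d), 0 < smoothedDensity lam f t x' := by
    intro x'
    rw [hp_eq, integral_pos_iff_support_of_nonneg_ae
      (Eventually.of_forall fun y => mul_nonneg (hq_nn y) (gaussK_pos ht _).le) (hFint x')]
    have hsupp : (Function.support fun y => q y * gaussK t (x' - y)) = Set.univ := by
      ext y
      simp only [Function.mem_support, Set.mem_univ, iff_true]
      exact ne_of_gt (mul_pos (hq_pos y) (gaussK_pos ht _))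
    rw [hsupp]
    exact isOpen_univ.measure_pos volume Set.univ_nonempty
  -- measurability of D1 / D2
  have hinnercont : Continuous (fun y : EuclideanSpace ℝ (Fin d) => innerSL ℝ y) :=
    (innerSL ℝ).continuous
  have hD1meas : ∀ x' : EuclideanSpace ℝ (Fin d),
      AEStronglyMeasurable (fun y => D1 q t x' y) volume := by
    intro x'
    unfold TweedieAux.D1
    exact ((hq_meas.aestronglyMeasurable.mul
        (((hKxcont x').div_const t)).aestronglyMeasurable)).smul
      ((hinnercont.comp (continuous_id.sub continuous_const)).aestronglyMeasurable)
  have hD1norm : ∀ x' y : EuclideanSpace ℝ (Fin d),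
      ‖D1 q t x' y‖ ≤ q y * (Cd * (1 + 2 * t) / t) := by
    intro x' y; rw [hCddef]; exact norm_D1_le ht hq_nn x' y
  have hD1int : ∀ x' : EuclideanSpace ℝ (Fin d), Integrable (fun y => D1 q t x' y) := fun x' =>
    (hq_int.mul_const _).mono' (hD1meas x') (Eventually.of_forall fun y => hD1norm x' y)
  have hp_deriv : ∀ x' : EuclideanSpace ℝ (Fin d),
      HasFDerivAt (fun x'' => smoothedDensity lam f t x'') (∫ y, D1 q t x' y) x' := by
    intro x₀
    have h := hasFDerivAt_integral_of_dominated_of_fderiv_le (𝕜 := ℝ) (μ := volume)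
      (F := fun x' y => q y * gaussK t (x' - y)) (F' := fun x' y => D1 q t x' y)
      (x₀ := x₀) (bound := fun y => q y * (Cd * (1 + 2 * t) / t)) (Metric.ball_mem_nhds x₀ zero_lt_one)
      (Eventually.of_forall hFmeas) (hFint x₀) (hD1meas x₀)
      (Eventually.of_forall fun y x' _ => hD1norm x' y)
      (hq_int.mul_const _)
      (Eventually.of_forall fun y x' _ => hasFDerivAt_D1 ht y x')
    exact h
  set N : EuclideanSpace ℝ (Fin d) → ℝ := fun x' => ∫ y, D1 q t x' y u with hNdef
  have hNapp : ∀ x' : EuclideanSpace ℝ (Fin d), (∫ y, D1 q t x' y) u = N x' :=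
    fun x' => ContinuousLinearMap.integral_apply (hD1int x') u
  have hD1umeas : ∀ x' : EuclideanSpace ℝ (Fin d),
      AEStronglyMeasurable (fun y => D1 q t x' y u) volume := fun x' =>
    (ContinuousLinearMap.apply ℝ ℝ u).continuous.comp_aestronglyMeasurable (hD1meas x')
  have hD1uint : ∀ x' : EuclideanSpace ℝ (Fin d), Integrable (fun y => D1 q t x' y u) := by
    intro x'
    refine (hq_int.mul_const (Cd * (1 + 2 * t) / t * ‖u‖)).mono' (hD1umeas x')
      (Eventually.of_forall fun y => ?_)
    calc ‖D1 q t x' y u‖ ≤ ‖D1 q t x' y‖ * ‖u‖ := (D1 q t x' y).le_opNorm u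
      _ ≤ q y * (Cd * (1 + 2 * t) / t) * ‖u‖ :=
          mul_le_mul_of_nonneg_right (hD1norm x' y) (norm_nonneg u)
      _ = q y * (Cd * (1 + 2 * t) / t * ‖u‖) := by ring
  have hD2meas : AEStronglyMeasurable (fun y => D2 q t u x y) volume := by
    unfold TweedieAux.D2
    have c1 : Continuous fun y : EuclideanSpace ℝ (Fin d) =>
        gaussK t (x - y) • (-(innerSL ℝ u)) := (hKxcont x).smul continuous_const
    have c2 : Continuous fun y : EuclideanSpace ℝ (Fin d) =>
        (⟪y - x, u⟫ : ℝ) • ((gaussK t (x - y) / t) • innerSL ℝ (y - x)) := by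
      refine Continuous.smul (f := fun y : EuclideanSpace ℝ (Fin d) => (⟪y - x, u⟫ : ℝ)) ?_ ?_
      · exact (continuous_id.sub continuous_const).inner continuous_const
      · exact ((hKxcont x).div_const t).smul
          (hinnercont.comp (continuous_id.sub continuous_const))
    exact ((hq_meas.div_const t).aestronglyMeasurable).smul
      (c1.add c2).aestronglyMeasurable
  have hD2norm : ∀ x' y : EuclideanSpace ℝ (Fin d),
      ‖D2 q t u x' y‖ ≤ q y * (3 * Cd * ‖u‖ / t) := by
    intro x' y; rw [hCddef]; exact norm_D2_le ht hq_nn u x' y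
  have hD2int : Integrable (fun y => D2 q t u x y) :=
    (hq_int.mul_const _).mono' hD2meas (Eventually.of_forall fun y => hD2norm x y)
  have hNderiv : HasFDerivAt N (∫ y, D2 q t u x y) x := by
    have h := hasFDerivAt_integral_of_dominated_of_fderiv_le (𝕜 := ℝ) (μ := volume)
      (F := fun x' y => D1 q t x' y u) (F' := fun x' y => D2 q t u x' y)
      (x₀ := x) (bound := fun y => q y * (3 * Cd * ‖u‖ / t)) (Metric.ball_mem_nhds x zero_lt_one)
      (Eventually.of_forall hD1umeas) (hD1uint x) hD2meas
      (Eventually.of_forall fun y x' _ => hD2norm x' y)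
      (hq_int.mul_const _)
      (Eventually.of_forall fun y x' _ => hasFDerivAt_D2 ht u y x')
    exact h
  have hD2app : (∫ y, D2 q t u x y) u = ∫ y, D2 q t u x y u := ContinuousLinearMap.integral_apply hD2int u
  have hlog : ∀ x' : EuclideanSpace ℝ (Fin d), HasFDerivAt (fun x'' => smoothedObj lam f t x'')
      ((-lam) • ((smoothedDensity lam f t x')⁻¹ • (∫ y, D1 q t x' y))) x' := by
    intro x'
    have h1 := ((hp_deriv x').log (ne_of_gt (hp_pos x'))).const_mul (-lam)
    exact h1
  have hfd : (fun x' => (fderiv ℝ (fun z => smoothedObj lam f t z) x') u)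
      = fun x' => -lam * (N x' * (smoothedDensity lam f t x')⁻¹) := by
    funext x'
    rw [(hlog x').fderiv]
    simp only [ContinuousLinearMap.coe_smul', Pi.smul_apply, smul_eq_mul]
    rw [hNapp x']
    ring
  have hinv : HasFDerivAt (fun x' => (smoothedDensity lam f t x')⁻¹)
      ((-(smoothedDensity lam f t x ^ 2)⁻¹) • (∫ y, D1 q t x y)) x :=
    (hasDerivAt_inv (ne_of_gt (hp_pos x))).comp_hasFDerivAt x (hp_deriv x)
  have hmain : HasFDerivAt (fun x' => -lam * (N x' * (smoothedDensity lam f t x')⁻¹))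
      ((-lam) • (N x • ((-(smoothedDensity lam f t x ^ 2)⁻¹) • (∫ y, D1 q t x y))
        + (smoothedDensity lam f t x)⁻¹ • (∫ y, D2 q t u x y))) x :=
    (hNderiv.mul hinv).const_mul (-lam)
  unfold hessQF
  rw [hfd, hmain.fderiv]
  simp only [ContinuousLinearMap.coe_smul', Pi.smul_apply, ContinuousLinearMap.add_apply,
    smul_eq_mul]
  rw [hNapp x, hD2app]
  -- scalar integral identities
  set P : ℝ := smoothedDensity lam f t x with hPdef
  have hPne : P ≠ 0 := ne_of_gt (hp_pos x)
  set c : ℝ := (⟪x, u⟫ : ℝ) with hcdef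
  set A1 : ℝ := ∫ y, q y * gaussK t (x - y) * ⟪y, u⟫ with hA1def
  set A2 : ℝ := ∫ y, q y * gaussK t (x - y) * (⟪y, u⟫ : ℝ) ^ 2 with hA2def
  have hinnermeas : Continuous fun y : EuclideanSpace ℝ (Fin d) => (⟪y, u⟫ : ℝ) :=
    continuous_id.inner continuous_const
  have hy_le : ∀ y : EuclideanSpace ℝ (Fin d), ‖y‖ ≤ 1 + ‖y‖ ^ 2 := by
    intro y; nlinarith [sq_nonneg (‖y‖ - 1), norm_nonneg y]
  have hJ1 : Integrable (fun y => q y * gaussK t (x - y) * ⟪y, u⟫) := by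
    have hb : Integrable (fun y => Cd * ‖u‖ * q y + Cd * ‖u‖ * (‖y‖ ^ 2 * q y)) :=
      (hq_int.const_mul _).add (hmom2.const_mul _)
    refine hb.mono' ((hFmeas x).mul hinnermeas.aestronglyMeasurable)
      (Eventually.of_forall fun y => ?_)
    have hKpos := gaussK_pos ht (x - y)
    have hKle : gaussK t (x - y) ≤ Cd := by rw [hCddef]; exact gaussK_le ht _
    have h1 : |(⟪y, u⟫ : ℝ)| ≤ ‖y‖ * ‖u‖ := abs_real_inner_le_norm y u
    rw [Real.norm_eq_abs, abs_mul, abs_of_nonneg (mul_nonneg (hq_nn y) hKpos.le)]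
    calc q y * gaussK t (x - y) * |(⟪y, u⟫ : ℝ)|
        ≤ q y * gaussK t (x - y) * (‖y‖ * ‖u‖) :=
          mul_le_mul_of_nonneg_left h1 (mul_nonneg (hq_nn y) hKpos.le)
      _ ≤ q y * Cd * (‖y‖ * ‖u‖) := by
          refine mul_le_mul_of_nonneg_right ?_ (mul_nonneg (norm_nonneg y) (norm_nonneg u))
          exact mul_le_mul_of_nonneg_left hKle (hq_nn y)
      _ ≤ q y * Cd * ((1 + ‖y‖ ^ 2) * ‖u‖) := by
          refine mul_le_mul_of_nonneg_left ?_ (mul_nonneg (hq_nn y) hCd.le)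
          exact mul_le_mul_of_nonneg_right (hy_le y) (norm_nonneg u)
      _ = Cd * ‖u‖ * q y + Cd * ‖u‖ * (‖y‖ ^ 2 * q y) := by ring
  have hJ2 : Integrable (fun y => q y * gaussK t (x - y) * (⟪y, u⟫ : ℝ) ^ 2) := by
    have hb : Integrable (fun y => Cd * ‖u‖ ^ 2 * (‖y‖ ^ 2 * q y)) := hmom2.const_mul _
    refine hb.mono' ((hFmeas x).mul (hinnermeas.pow 2).aestronglyMeasurable)
      (Eventually.of_forall fun y => ?_)
    have hKpos := gaussK_pos ht (x - y)
    have hKle : gaussK t (x - y) ≤ Cd := by rw [hCddef]; exact gaussK_le ht _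
    have h1 : (⟪y, u⟫ : ℝ) ^ 2 ≤ ‖y‖ ^ 2 * ‖u‖ ^ 2 := by
      have := abs_real_inner_le_norm y u
      nlinarith [abs_nonneg (⟪y, u⟫ : ℝ), sq_abs (⟪y, u⟫ : ℝ), norm_nonneg y, norm_nonneg u]
    rw [Real.norm_eq_abs, abs_of_nonneg
      (mul_nonneg (mul_nonneg (hq_nn y) hKpos.le) (sq_nonneg _))]
    calc q y * gaussK t (x - y) * (⟪y, u⟫ : ℝ) ^ 2
        ≤ q y * gaussK t (x - y) * (‖y‖ ^ 2 * ‖u‖ ^ 2) :=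
          mul_le_mul_of_nonneg_left h1 (mul_nonneg (hq_nn y) hKpos.le)
      _ ≤ q y * Cd * (‖y‖ ^ 2 * ‖u‖ ^ 2) := by
          refine mul_le_mul_of_nonneg_right ?_ (by positivity)
          exact mul_le_mul_of_nonneg_left hKle (hq_nn y)
      _ = Cd * ‖u‖ ^ 2 * (‖y‖ ^ 2 * q y) := by ring
  have hpost1 : (∫ y, posterior lam f t x y * ⟪y, u⟫) = A1 / P := by
    have h : ∀ y : EuclideanSpace ℝ (Fin d), posterior lam f t x y * ⟪y, u⟫
        = (q y * gaussK t (x - y) * ⟪y, u⟫) / P := by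
      intro y; simp only [posterior, ← hqdef, ← hPdef]; ring
    simp only [h]
    rw [integral_div, ← hA1def]
  have hpost2 : (∫ y, posterior lam f t x y * (⟪y, u⟫ : ℝ) ^ 2) = A2 / P := by
    have h : ∀ y : EuclideanSpace ℝ (Fin d), posterior lam f t x y * (⟪y, u⟫ : ℝ) ^ 2
        = (q y * gaussK t (x - y) * (⟪y, u⟫ : ℝ) ^ 2) / P := by
      intro y; simp only [posterior, ← hqdef, ← hPdef]; ring
    simp only [h]
    rw [integral_div, ← hA2def]
  have hNx : N x = A1 / t - c / t * P := by
    have h : (fun y => D1 q t x y u)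
        = fun y => (q y * gaussK t (x - y) * ⟪y, u⟫) / t
            - (c / t) * (q y * gaussK t (x - y)) := by
      funext y
      rw [D1_apply, inner_sub_left, ← hcdef]
      ring
    rw [hNdef]
    show (∫ y, D1 q t x y u) = _
    have hi1 : Integrable (fun y => (q y * gaussK t (x - y) * ⟪y, u⟫) / t) volume :=
      hJ1.div_const t
    have hi2 : Integrable (fun y => (c / t) * (q y * gaussK t (x - y))) volume :=
      (hFint x).const_mul (c / t)
    rw [h, integral_sub hi1 hi2, integral_div, integral_const_mul, ← hA1def, ← hp_eq, ← hPdef]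
  have hM : (∫ y, D2 q t u x y u)
      = A2 / t ^ 2 - 2 * c / t ^ 2 * A1 + (c ^ 2 / t ^ 2 - ‖u‖ ^ 2 / t) * P := by
    have h : (fun y => D2 q t u x y u)
        = fun y => (q y * gaussK t (x - y) * (⟪y, u⟫ : ℝ) ^ 2) / t ^ 2
            - (2 * c / t ^ 2) * (q y * gaussK t (x - y) * ⟪y, u⟫)
            + (c ^ 2 / t ^ 2 - ‖u‖ ^ 2 / t) * (q y * gaussK t (x - y)) := by
      funext y
      rw [D2_apply q ht, inner_sub_left, ← hcdef]
      ring
    have hi1 : Integrable (fun y => (q y * gaussK t (x - y) * (⟪y, u⟫ : ℝ) ^ 2) / t ^ 2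
        - (2 * c / t ^ 2) * (q y * gaussK t (x - y) * ⟪y, u⟫)) volume :=
      (hJ2.div_const _).sub (hJ1.const_mul _)
    have hi2 : Integrable (fun y => (c ^ 2 / t ^ 2 - ‖u‖ ^ 2 / t) * (q y * gaussK t (x - y)))
        volume := (hFint x).const_mul _
    have hi3 : Integrable (fun y => (q y * gaussK t (x - y) * (⟪y, u⟫ : ℝ) ^ 2) / t ^ 2)
        volume := hJ2.div_const _
    have hi4 : Integrable (fun y => (2 * c / t ^ 2) * (q y * gaussK t (x - y) * ⟪y, u⟫))
        volume := hJ1.const_mul _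
    rw [h, integral_add hi1 hi2, integral_sub hi3 hi4,
      integral_div, integral_const_mul, integral_const_mul, ← hA1def, ← hA2def, ← hp_eq, ← hPdef]
  rw [hpost1, hpost2, hNx, hM]
  field_simp
  ring
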